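/- Fix σ > 0 and x ∈ ℝ. For 0 < q < 1 let d(q) = 2(2−q)/(1−q) + 1 and define the q-Gaussian density f(x; q) = [ Γ((2−q)/(1−q) + 1/2) / ( Γ((2−q)/(1−q)) · σ · √(π·d(q)) ) ] · (max(0, 1 − x²/(d(q)σ²)))^{1/(1−q)}. Then lim_{q→1⁻} f(x; q) = (1/(σ√(2π))) · exp(−x²/(2σ²)), i.e. the q-Gaussian densities with q < 1 converge pointwise to the Gaussian density with variance σ² as q tends to 1 from below. -/

import Mathlib

open Real Filter

/-- The q-Gaussian density for q < 1. -/
noncomputable def qGaussianLow (σ : ℝ) (q : ℝ) (x : ℝ) : ℝ :=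
  Real.Gamma ((2 - q)/(1 - q) + 1/2) /
      (Real.Gamma ((2 - q)/(1 - q)) * σ * Real.sqrt (Real.pi * (2*(2 - q)/(1 - q) + 1))) *
    (max 0 (1 - x^2/((2*(2 - q)/(1 - q) + 1) * σ^2)))^(1/(1 - q))

lemma gamma_midpoint {p r : ℝ} (hp : 0 < p) (hr : 0 < r) :
    Real.Gamma ((p+r)/2) ^ 2 ≤ Real.Gamma p * Real.Gamma r := by
  have hc := Real.convexOn_log_Gamma
  have h := hc.2 (Set.mem_Ioi.2 hp) (Set.mem_Ioi.2 hr)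
    (by norm_num : (0:ℝ) ≤ 1/2) (by norm_num : (0:ℝ) ≤ 1/2) (by norm_num)
  simp only [smul_eq_mul, Function.comp] at h
  have hmid : (1/2:ℝ)*p + (1/2:ℝ)*r = (p+r)/2 := by ring
  rw [hmid] at h
  have hgp := Real.Gamma_pos_of_pos hp
  have hgr := Real.Gamma_pos_of_pos hr
  have hgm := Real.Gamma_pos_of_pos (by positivity : (0:ℝ) < (p+r)/2)
  have hlog : Real.log (Real.Gamma ((p+r)/2) ^ 2) ≤ Real.log (Real.Gamma p * Real.Gamma r) := by
    rw [Real.log_pow, Real.log_mul (ne_of_gt hgp) (ne_of_gt hgr)]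
    push_cast
    linarith
  exact (Real.log_le_log_iff (by positivity) (by positivity)).mp hlog

lemma gamma_ratio_upper {x : ℝ} (hx : 0 < x) :
    Real.Gamma (x + 1/2) ≤ Real.Gamma x * Real.sqrt x := by
  have h := gamma_midpoint hx (by linarith : (0:ℝ) < x + 1)
  have hmid : (x + (x+1))/2 = x + 1/2 := by ring
  rw [hmid, Real.Gamma_add_one (ne_of_gt hx)] at h
  have hg := Real.Gamma_pos_of_pos hx
  have h2 : Real.Gamma (x + 1/2) ^ 2 ≤ (Real.Gamma x * Real.sqrt x) ^ 2 := by
    have : (Real.Gamma x * Real.sqrt x)^2 = Real.Gamma x * (x * Real.Gamma x) := by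
      rw [mul_pow, Real.sq_sqrt hx.le]; ring
    linarith
  exact (pow_le_pow_iff_left₀ (Real.Gamma_pos_of_pos (by linarith : (0:ℝ) < x + 1/2)).le
    (by positivity) (by norm_num)).mp h2

lemma gamma_ratio_lower {x : ℝ} (hx : 0 < x) :
    x * Real.Gamma x ≤ Real.Gamma (x + 1/2) * Real.sqrt (x + 1/2) := by
  have h := gamma_midpoint (by linarith : (0:ℝ) < x + 1/2) (by linarith : (0:ℝ) < x + 3/2)
  have hmid : ((x + 1/2) + (x + 3/2))/2 = x + 1 := by ring
  have h32 : (x:ℝ) + 3/2 = (x + 1/2) + 1 := by ring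
  rw [hmid, h32, Real.Gamma_add_one (by positivity : (x:ℝ) + 1/2 ≠ 0),
    Real.Gamma_add_one (ne_of_gt hx)] at h
  have h2 : (x * Real.Gamma x) ^ 2 ≤ (Real.Gamma (x + 1/2) * Real.sqrt (x + 1/2)) ^ 2 := by
    have : (Real.Gamma (x + 1/2) * Real.sqrt (x + 1/2))^2
        = Real.Gamma (x + 1/2) * ((x + 1/2) * Real.Gamma (x + 1/2)) := by
      rw [mul_pow, Real.sq_sqrt (by positivity : (0:ℝ) ≤ x + 1/2)]; ring
    linarith
  have hg := Real.Gamma_pos_of_pos hx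
  exact (pow_le_pow_iff_left₀ (by positivity)
    (by positivity) (by norm_num)).mp h2

lemma gamma_ratio_tendsto :
    Tendsto (fun x : ℝ => Real.Gamma (x + 1/2) / (Real.Gamma x * Real.sqrt x))
      atTop (nhds 1) := by
  have hL : Tendsto (fun x : ℝ => Real.sqrt x / Real.sqrt (x + 1/2)) atTop (nhds 1) := by
    have h1 : Tendsto (fun x : ℝ => x / (x + 1/2)) atTop (nhds 1) := by
      have : Tendsto (fun x : ℝ => (1 + (1/2) * x⁻¹)⁻¹) atTop (nhds 1) := by
        have := ((tendsto_const_nhds (x := (1:ℝ))).add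
          ((tendsto_const_nhds (x := (1/2:ℝ))).mul tendsto_inv_atTop_zero)).inv₀ (by norm_num)
        simpa using this
      refine this.congr' ?_
      filter_upwards [eventually_gt_atTop 0] with x hx
      field_simp
    have := (Real.continuous_sqrt.continuousAt (x := (1:ℝ))).tendsto.comp h1
    rw [Real.sqrt_one] at this
    refine this.congr' ?_
    filter_upwards [eventually_gt_atTop 0] with x hx
    simp [Function.comp, Real.sqrt_div' , Real.sqrt_div hx.le]
  refine tendsto_of_tendsto_of_tendsto_of_le_of_le' hL tendsto_const_nhds ?_ ?_
  · filter_upwards [eventually_gt_atTop 0] with x hx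
    have hg := Real.Gamma_pos_of_pos hx
    have hs : (0:ℝ) < Real.sqrt x := Real.sqrt_pos.2 hx
    have hs2 : (0:ℝ) < Real.sqrt (x + 1/2) := Real.sqrt_pos.2 (by linarith)
    rw [le_div_iff₀ (by positivity)]
    rw [div_mul_eq_mul_div, div_le_iff₀ hs2]
    have key := gamma_ratio_lower hx
    calc Real.sqrt x * (Real.Gamma x * Real.sqrt x) = x * Real.Gamma x := by
          rw [← mul_assoc, mul_comm (Real.sqrt x), mul_assoc, Real.mul_self_sqrt hx.le]; ring
      _ ≤ Real.Gamma (x + 1/2) * Real.sqrt (x + 1/2) := key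
  · filter_upwards [eventually_gt_atTop 0] with x hx
    have hg := Real.Gamma_pos_of_pos hx
    have hs : (0:ℝ) < Real.sqrt x := Real.sqrt_pos.2 hx
    rw [div_le_one (by positivity)]
    simpa using gamma_ratio_upper hx

lemma aux_tendsto (σ : ℝ) (hσ : 0 < σ) (x : ℝ) :
    Tendsto (fun ν : ℝ =>
      Real.Gamma (ν + 1/2) / (Real.Gamma ν * σ * Real.sqrt (Real.pi * (2*ν + 1))) *
        (max 0 (1 - x^2/((2*ν + 1) * σ^2)))^(ν - 1))
      atTop (nhds (1/(σ * Real.sqrt (2*Real.pi)) * Real.exp (-x^2/(2*σ^2)))) := by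
  set c : ℝ := x^2/σ^2 with hc_def
  have hc : 0 ≤ c := by positivity
  -- Part A
  have hA2 : Tendsto (fun ν : ℝ => Real.sqrt ν / (σ * Real.sqrt (Real.pi * (2*ν + 1))))
      atTop (nhds (1/(σ * Real.sqrt (2*Real.pi)))) := by
    have hfrac : Tendsto (fun ν : ℝ => ν / (Real.pi * (2*ν + 1))) atTop
        (nhds ((Real.pi * 2)⁻¹)) := by
      have h0 : Tendsto (fun ν : ℝ => (Real.pi * (2 + ν⁻¹))⁻¹) atTop
          (nhds ((Real.pi * 2)⁻¹)) := by
        have := (((tendsto_const_nhds (x := Real.pi)).mul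
          ((tendsto_const_nhds (x := (2:ℝ))).add tendsto_inv_atTop_zero))).inv₀
          (by positivity)
        simpa using this
      refine Tendsto.congr' ?_ h0
      filter_upwards [eventually_gt_atTop 0] with ν hν
      have h2 : (0:ℝ) < 2*ν + 1 := by linarith
      field_simp
    have key : Tendsto (fun ν : ℝ => Real.sqrt (ν / (Real.pi * (2*ν + 1)))) atTop
        (nhds ((Real.sqrt (2*Real.pi))⁻¹)) := by
      have hs := (Real.continuous_sqrt.continuousAt (x := (Real.pi * 2)⁻¹)).tendsto.comp hfrac
      have : Real.sqrt ((Real.pi * 2)⁻¹) = (Real.sqrt (2*Real.pi))⁻¹ := by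
        rw [Real.sqrt_inv, mul_comm]
      rw [this] at hs
      exact hs
    have h := (tendsto_const_nhds (x := σ⁻¹)).mul key
    have heq : σ⁻¹ * (Real.sqrt (2*Real.pi))⁻¹ = 1/(σ * Real.sqrt (2*Real.pi)) := by
      rw [← mul_inv, one_div]
    rw [heq] at h
    refine Tendsto.congr' ?_ h
    filter_upwards [eventually_gt_atTop 0] with ν hν
    have h2 : (0:ℝ) < 2*ν + 1 := by linarith
    rw [Real.sqrt_div hν.le]
    ring
  have hA : Tendsto (fun ν : ℝ =>
      Real.Gamma (ν + 1/2) / (Real.Gamma ν * σ * Real.sqrt (Real.pi * (2*ν + 1))))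
      atTop (nhds (1/(σ * Real.sqrt (2*Real.pi)))) := by
    have h := gamma_ratio_tendsto.mul hA2
    rw [one_mul] at h
    refine Tendsto.congr' ?_ h
    filter_upwards [eventually_gt_atTop 0] with ν hν
    have hg := Real.Gamma_pos_of_pos hν
    have hs : (0:ℝ) < Real.sqrt ν := Real.sqrt_pos.2 hν
    have h2 : (0:ℝ) < Real.sqrt (Real.pi * (2*ν + 1)) :=
      Real.sqrt_pos.2 (by positivity)
    field_simp
  -- Part B
  have hB : Tendsto (fun ν : ℝ => (max 0 (1 - x^2/((2*ν + 1) * σ^2)))^(ν - 1))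
      atTop (nhds (Real.exp (-x^2/(2*σ^2)))) := by
    have hcomp : Tendsto (fun ν : ℝ => (1 + (-c)/(2*ν + 1))^(2*ν + 1)) atTop
        (nhds (Real.exp (-c))) := by
      have hlin : Tendsto (fun ν : ℝ => 2*ν + 1) atTop atTop :=
        tendsto_atTop_add_const_right _ 1
          (tendsto_id.const_mul_atTop (by norm_num : (0:ℝ) < 2))
      exact (tendsto_one_add_div_rpow_exp (-c)).comp hlin
    have h2 : Tendsto (fun ν : ℝ => (ν - 1)/(2*ν + 1)) atTop (nhds (1/2)) := by
      have h0 : Tendsto (fun ν : ℝ => (1 - ν⁻¹)/(2 + ν⁻¹)) atTop (nhds (1/2)) := by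
        have := (((tendsto_const_nhds (x := (1:ℝ))).sub tendsto_inv_atTop_zero)).div
          (((tendsto_const_nhds (x := (2:ℝ))).add tendsto_inv_atTop_zero)) (by norm_num)
        simpa [Pi.div_def] using this
      refine Tendsto.congr' ?_ h0
      filter_upwards [eventually_gt_atTop 0] with ν hν
      have hd : (0:ℝ) < 2*ν + 1 := by linarith
      field_simp
    have hrp := hcomp.rpow h2 (Or.inl (Real.exp_ne_zero _))
    have hval : Real.exp (-c) ^ ((1:ℝ)/2) = Real.exp (-x^2/(2*σ^2)) := by
      rw [← Real.exp_mul]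
      congr 1
      rw [hc_def]
      field_simp
    rw [hval] at hrp
    refine Tendsto.congr' ?_ hrp
    filter_upwards [eventually_ge_atTop (max 1 c)] with ν hν
    have hν1 : (1:ℝ) ≤ ν := le_trans (le_max_left _ _) hν
    have hνc : c ≤ ν := le_trans (le_max_right _ _) hν
    have hd : (0:ℝ) < 2*ν + 1 := by linarith
    have hfrac : c / (2*ν + 1) < 1 := by
      rw [div_lt_one hd]; linarith
    have hbase : 0 ≤ 1 + (-c)/(2*ν + 1) := by
      rw [neg_div]; linarith
    have hxe : x^2/((2*ν + 1) * σ^2) = c/(2*ν + 1) := by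
      rw [hc_def]; field_simp
    have hmax : max 0 (1 - x^2/((2*ν + 1) * σ^2)) = 1 + (-c)/(2*ν + 1) := by
      rw [hxe, neg_div]
      rw [max_eq_right (by linarith)]
      ring
    have hmul : (2*ν + 1) * ((ν - 1)/(2*ν + 1)) = ν - 1 := by
      field_simp
    rw [hmax, ← Real.rpow_mul hbase, hmul]
  have := hA.mul hB
  exact this

theorem qGaussianLow_tendsto_gaussian (σ : ℝ) (hσ : 0 < σ) (x : ℝ) :
    Filter.Tendsto (fun q : ℝ => qGaussianLow σ q x)
      (nhdsWithin 1 (Set.Ioo (0 : ℝ) 1))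
      (nhds (1/(σ * Real.sqrt (2*Real.pi)) * Real.exp (-x^2/(2*σ^2)))) := by
  have hν : Tendsto (fun q : ℝ => (2 - q)/(1 - q)) (nhdsWithin 1 (Set.Ioo (0:ℝ) 1)) atTop := by
    have hsub : Tendsto (fun q : ℝ => 1 - q) (nhdsWithin 1 (Set.Ioo (0:ℝ) 1))
        (nhdsWithin 0 (Set.Ioi 0)) := by
      apply tendsto_nhdsWithin_of_tendsto_nhds_of_eventually_within
      · have hcont : Tendsto (fun q : ℝ => 1 - q) (nhds 1) (nhds 0) := by
          have := Continuous.tendsto (by continuity : Continuous fun q : ℝ => 1 - q) 1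
          simpa using this
        exact hcont.mono_left nhdsWithin_le_nhds
      · filter_upwards [self_mem_nhdsWithin] with q hq
        exact Set.mem_Ioi.2 (by linarith [hq.2])
    have hinv := tendsto_inv_nhdsGT_zero.comp hsub
    have hadd := tendsto_atTop_add_const_left _ (1:ℝ) hinv
    refine Tendsto.congr' ?_ hadd
    filter_upwards [self_mem_nhdsWithin] with q hq
    have h1 : (1:ℝ) - q ≠ 0 := by have := hq.2; intro h; linarith [sub_eq_zero.mp h]
    show 1 + (1 - q)⁻¹ = (2 - q)/(1 - q)
    field_simp
    ring
  have := (aux_tendsto σ hσ x).comp hν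
  refine Tendsto.congr' ?_ this
  filter_upwards [self_mem_nhdsWithin] with q hq
  have h1 : (1:ℝ) - q ≠ 0 := by have := hq.2; intro h; linarith [sub_eq_zero.mp h]
  show _ = qGaussianLow σ q x
  unfold qGaussianLow
  have e1 : 2*((2 - q)/(1 - q)) + 1 = 2*(2 - q)/(1 - q) + 1 := by ring
  have e2 : (2 - q)/(1 - q) - 1 = 1/(1 - q) := by field_simp; ring
  simp only [Function.comp, e1, e2]
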